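/- Let G = (V,E) be a finite simple graph, fix α ≥ 1, d ≥ 0, ε ∈ (0,1), and any positive integer L. Let (Z_1, …, Z_L) be an (α, d, L)-decomposition of G, and let S* be a nonempty densest subgraph (a maximizer of ρ(S) = |E(S)|/|S|). If d < ρ(S*)/α, then S* ⊆ Z_i for every i ∈ {1,…,L}; in particular Z_L ≠ ∅. -/

import Mathlib

open Finset
open scoped Classical

variable {V : Type*} [Fintype V] [DecidableEq V]

/-- Degree of `v` within the node set `S`: number of neighbors of `v` inside `S`. -/
noncomputable def degIn (G : SimpleGraph V) (v : V) (S : Finset V) : ℕ :=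
  (S.filter fun u => G.Adj v u).card

/-- The set of edges of `G` with both endpoints in `S`. -/
noncomputable def edgesIn (G : SimpleGraph V) (S : Finset V) : Finset (Sym2 V) :=
  G.edgeFinset.filter fun e => ∀ v ∈ e, v ∈ S

/-- Density of the subgraph induced by `S`: `|E(S)|/|S|`. -/
noncomputable def density (G : SimpleGraph V) (S : Finset V) : ℝ :=
  (edgesIn G S).card / S.card

/-- An `(α, d, L)`-decomposition of `G`: a chain `V = Z 1 ⊇ Z 2 ⊇ ⋯ ⊇ Z L` such that
every node of `Z i` with degree `> α d` inside `Z i` is included in `Z (i+1)`, and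
no node of `Z i` with degree `< d` inside `Z i` belongs to `Z (i+1)`. -/
def IsDecomp (G : SimpleGraph V) (α d : ℝ) (L : ℕ) (Z : ℕ → Finset V) : Prop :=
  Z 1 = Finset.univ ∧
  (∀ i, 1 ≤ i → i < L → Z (i + 1) ⊆ Z i) ∧
  (∀ i, 1 ≤ i → i < L → ∀ v ∈ Z i, α * d < (degIn G v (Z i) : ℝ) → v ∈ Z (i + 1)) ∧
  (∀ i, 1 ≤ i → i < L → ∀ v ∈ Z i, (degIn G v (Z i) : ℝ) < d → v ∉ Z (i + 1))

lemma degIn_mono (G : SimpleGraph V) (v : V) {S T : Finset V} (h : S ⊆ T) :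
    degIn G v S ≤ degIn G v T :=
  Finset.card_le_card (Finset.filter_subset_filter _ h)

lemma card_incident (G : SimpleGraph V) (S : Finset V) (v : V) (hvS : v ∈ S) :
    ((edgesIn G S).filter fun e => v ∈ e).card = degIn G v S := by
  classical
  rw [degIn]
  symm
  apply Finset.card_bij (fun u _ => s(v, u))
  · intro u hu
    simp only [Finset.mem_filter] at hu ⊢
    constructor
    · simp only [edgesIn, Finset.mem_filter, SimpleGraph.mem_edgeFinset]
      refine ⟨?_, ?_⟩
      · exact hu.2
      · intro w hw
        rcases Sym2.mem_iff.mp hw with rfl | rfl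
        · exact hvS
        · exact hu.1
    · exact Sym2.mem_mk_left v u
  · intro a ha b hb hab
    have := Sym2.congr_right.mp hab
    exact this
  · intro e he
    simp only [Finset.mem_filter] at he
    obtain ⟨⟨hedge, hmem⟩, hv⟩ := (by simpa [edgesIn, Finset.mem_filter] using he : (e ∈ G.edgeFinset ∧ ∀ w ∈ e, w ∈ S) ∧ v ∈ e)
    refine ⟨Sym2.Mem.other hv, ?_, ?_⟩
    · simp only [Finset.mem_filter]
      refine ⟨hmem _ (Sym2.other_mem hv), ?_⟩
      have : s(v, Sym2.Mem.other hv) ∈ G.edgeSet := by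
        rw [Sym2.other_spec hv]; exact SimpleGraph.mem_edgeFinset.mp hedge
      exact this
    · exact Sym2.other_spec hv

lemma edgesIn_erase (G : SimpleGraph V) (S : Finset V) (v : V) :
    edgesIn G (S.erase v) = (edgesIn G S).filter fun e => v ∉ e := by
  classical
  ext e
  simp only [edgesIn, Finset.mem_filter, Finset.mem_erase]
  constructor
  · rintro ⟨he, h⟩
    exact ⟨⟨he, fun w hw => (h w hw).2⟩, fun hv => (h v hv).1 rfl⟩
  · rintro ⟨⟨he, h⟩, hv⟩
    exact ⟨he, fun w hw => ⟨fun hwv => hv (hwv ▸ hw), h w hw⟩⟩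

lemma min_degree (G : SimpleGraph V) (Sstar : Finset V) (hne : Sstar.Nonempty)
    (hmax : ∀ S : Finset V, S.Nonempty → density G S ≤ density G Sstar) :
    ∀ v ∈ Sstar, density G Sstar ≤ (degIn G v Sstar : ℝ) := by
  classical
  intro v hv
  have hsplit : ((edgesIn G Sstar).filter fun e => v ∉ e).card + degIn G v Sstar
      = (edgesIn G Sstar).card := by
    have h := Finset.card_filter_add_card_filter_not (s := edgesIn G Sstar)
      (p := fun e => v ∈ e)
    rw [card_incident G Sstar v hv] at h
    omega
  rcases Nat.lt_or_ge Sstar.card 2 with h2 | h2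
  · -- |S| = 1
    have h1 : Sstar.card = 1 := le_antisymm (by omega) (Finset.card_pos.mpr hne)
    obtain ⟨a, ha⟩ := Finset.card_eq_one.mp h1
    have hE : edgesIn G Sstar = ∅ := by
      ext e
      simp only [edgesIn, Finset.mem_filter, ha, Finset.mem_singleton, Finset.notMem_empty,
        iff_false, not_and]
      intro he h
      induction e with
      | h x y =>
        have hx := h x (Sym2.mem_mk_left x y)
        have hy := h y (Sym2.mem_mk_right x y)
        subst hx; subst hy
        exact G.irrefl (SimpleGraph.mem_edgeFinset.mp he)
    simp [density, hE]
  · -- |S| ≥ 2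
    set n := Sstar.card
    have hnpos : (0:ℝ) < n := by positivity
    have herase : (Sstar.erase v).Nonempty := by
      rw [← Finset.card_pos, Finset.card_erase_of_mem hv]; omega
    have hle := hmax _ herase
    have hcard : ((Sstar.erase v).card : ℝ) = (n:ℝ) - 1 := by
      rw [Finset.card_erase_of_mem hv]
      have : 1 ≤ n := by omega
      rw [Nat.cast_sub (show 1 ≤ Sstar.card by omega), Nat.cast_one]
    rw [density, density, edgesIn_erase, hcard] at hle
    have hA : (((edgesIn G Sstar).filter fun e => v ∉ e).card : ℝ)
        = ((edgesIn G Sstar).card : ℝ) - (degIn G v Sstar : ℝ) := by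
      have h : (((edgesIn G Sstar).filter fun e => v ∉ e).card : ℝ) + (degIn G v Sstar : ℝ)
          = ((edgesIn G Sstar).card : ℝ) := by exact_mod_cast hsplit
      linarith
    rw [hA] at hle
    have hn1 : (0:ℝ) < (n:ℝ) - 1 := by
      have h2' : (2:ℝ) ≤ (n:ℝ) := by exact_mod_cast h2
      linarith
    rw [div_le_div_iff₀ hn1 hnpos] at hle
    rw [density, div_le_iff₀ hnpos]
    nlinarith [hle]

/-- If `d < ρ(S*)/α`, then the densest subgraph `S*` survives in every level of an
`(α,d,L)`-decomposition; in particular the topmost level is nonempty. -/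
theorem decomp_top_level_nonempty (G : SimpleGraph V) (α d ε : ℝ)
    (hα : 1 ≤ α) (hd : 0 ≤ d) (hε0 : 0 < ε) (hε1 : ε < 1) (L : ℕ) (hL : 1 ≤ L)
    (Z : ℕ → Finset V) (hZ : IsDecomp G α d L Z)
    (Sstar : Finset V) (hne : Sstar.Nonempty)
    (hmax : ∀ S : Finset V, S.Nonempty → density G S ≤ density G Sstar)
    (hsmall : d < density G Sstar / α) :
    (∀ i, 1 ≤ i → i ≤ L → Sstar ⊆ Z i) ∧ Z L ≠ ∅ := by
  obtain ⟨hZ1, hsub, hup, hdown⟩ := hZ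
  have hα0 : (0:ℝ) < α := lt_of_lt_of_le zero_lt_one hα
  have hαd : α * d < density G Sstar := by
    rw [lt_div_iff₀ hα0] at hsmall
    linarith [mul_comm d α]
  have key : ∀ i, 1 ≤ i → i ≤ L → Sstar ⊆ Z i := by
    intro i
    induction i with
    | zero => omega
    | succ k ih =>
      intro h1 h2
      rcases Nat.eq_or_lt_of_le h1 with h | h
      · rw [← h, hZ1]; exact Finset.subset_univ _
      · have hk1 : 1 ≤ k := by omega
        have hkL : k < L := by omega
        have hSk : Sstar ⊆ Z k := ih hk1 (by omega)
        intro v hv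
        apply hup k hk1 hkL v (hSk hv)
        calc α * d < density G Sstar := hαd
          _ ≤ (degIn G v Sstar : ℝ) := min_degree G Sstar hne hmax v hv
          _ ≤ (degIn G v (Z k) : ℝ) := by exact_mod_cast degIn_mono G v hSk
  refine ⟨key, ?_⟩
  intro hempty
  have := key L hL le_rfl
  rw [hempty] at this
  obtain ⟨v, hv⟩ := hne
  exact Finset.notMem_empty v (this hv)
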